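/- Consider the ODE J' = 2(a − J)√((b + J) J) with parameters a > b > 0 and initial condition J(0) = ε where 0 < ε. Suppose a = (c − ε)/3 + ε and b = (c − ε)/3 − ε with c > (8/3)ε. Then the solution is monotone increasing and reaches c/6 at a time T₀ = (1/2)∫_ε^{c/6} [(a − J)√((b+J)J)]^{−1} dJ which satisfies T₀ ≤ 6/c. -/

import Mathlib

open Set MeasureTheory intervalIntegral

set_option maxHeartbeats 1000000 in
/-- Drifting orbit for the NLS resonant model: J' = 2(a − J)√((b+J)J), J(0) = ε,
reaches c/6 at time T₀ = (1/2)∫ [(a−J)√((b+J)J)]⁻¹ dJ ≤ 6/c. -/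
theorem stmt12 (a b c ε : ℝ) (hε : 0 < ε) (hc : 8/3 * ε < c)
    (ha : a = (c - ε)/3 + ε) (hb : b = (c - ε)/3 - ε)
    (hb0 : 0 < b) (hba : b < a)
    (T0 : ℝ)
    (hT0 : T0 = (1/2) * ∫ J in ε..(c/6), ((a - J) * Real.sqrt ((b + J) * J))⁻¹) :
    (∃ J : ℝ → ℝ, J 0 = ε ∧
      (∀ t ∈ Set.Icc (0:ℝ) T0,
        HasDerivAt J (2 * (a - J t) * Real.sqrt ((b + J t) * J t)) t) ∧
      MonotoneOn J (Set.Icc (0:ℝ) T0) ∧ J T0 = c/6) ∧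
    T0 ≤ 6 / c := by
  classical
  have hc0 : 0 < c := by nlinarith
  have hεa : ε < a := by nlinarith
  have hac6 : a - c/6 = c/6 + 2*ε/3 := by rw [ha]; ring
  set g : ℝ → ℝ := fun y => 2 * (a - y) * Real.sqrt ((b + y) * y) with hgdef
  set f : ℝ → ℝ := fun y => (g y)⁻¹ with hfdef
  have hg_cont : Continuous g := by
    have h1 : Continuous fun y : ℝ => (b + y) * y := by continuity
    exact (continuous_const.mul (continuous_const.sub continuous_id)).mul
      (Real.continuous_sqrt.comp h1)
  have hg_pos : ∀ y ∈ Ioo (0:ℝ) a, 0 < g y := by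
    rintro y ⟨hy0, hya⟩
    have h1 : 0 < (b + y) * y := mul_pos (by linarith) hy0
    have h2 : 0 < Real.sqrt ((b + y) * y) := Real.sqrt_pos.mpr h1
    exact mul_pos (by linarith) h2
  have hf_half : ∀ s : ℝ, f s = (1/2) * ((a - s) * Real.sqrt ((b + s) * s))⁻¹ := by
    intro s
    show (2 * (a - s) * Real.sqrt ((b + s) * s))⁻¹ = _
    rw [mul_assoc, mul_inv]
    norm_num
  have hT0' : T0 = ∫ s in ε..(c/6), f s := by
    rw [hT0, ← intervalIntegral.integral_const_mul]
    exact intervalIntegral.integral_congr (fun s _ => (hf_half s).symm)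
  have hf_ca : ∀ y ∈ Ioo (0:ℝ) a, ContinuousAt f y := fun y hy =>
    hg_cont.continuousAt.inv₀ (hg_pos y hy).ne'
  have hf_co : ContinuousOn f (Ioo 0 a) := continuousOn_of_forall_continuousAt hf_ca
  rcases lt_trichotomy ε (c/6) with hlt | heq | hgt
  · -- main case : ε < c/6
    set ε' : ℝ := ε/2 with hε'def
    set c' : ℝ := c/6 + ε/2 with hc'def
    have hsub : Icc ε' c' ⊆ Ioo 0 a := by
      intro y hy
      refine ⟨by have := hy.1; simp only [hε'def] at this; linarith, ?_⟩
      have := hy.2; simp only [hc'def] at this; linarith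
    have hε'c' : ε' < c' := by simp only [hε'def, hc'def]; linarith
    have hε'mem : ε' ∈ Icc ε' c' := left_mem_Icc.mpr hε'c'.le
    have hc'mem : c' ∈ Icc ε' c' := right_mem_Icc.mpr hε'c'.le
    have hεmem : ε ∈ Icc ε' c' := ⟨by simp only [hε'def]; linarith, by simp only [hc'def]; linarith⟩
    have hc6mem : c/6 ∈ Icc ε' c' := ⟨by simp only [hε'def]; linarith, by simp only [hc'def]; linarith⟩
    have hint : ∀ u ∈ Icc ε' c', ∀ v ∈ Icc ε' c', IntervalIntegrable f volume u v :=
      fun u hu v hv =>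
        ((hf_co.mono ((uIcc_subset_Icc hu hv).trans hsub))).intervalIntegrable
    set F : ℝ → ℝ := fun y => ∫ s in ε..y, f s with hFdef
    have hF_deriv : ∀ y ∈ Icc ε' c', HasDerivAt F (f y) y := fun y hy =>
      intervalIntegral.integral_hasDerivAt_right (hint ε hεmem y hy)
        (ContinuousAt.stronglyMeasurableAtFilter isOpen_Ioo hf_ca y (hsub hy))
        (hf_ca y (hsub hy))
    have hF_cont : ContinuousOn F (Icc ε' c') := fun y hy =>
      (hF_deriv y hy).continuousAt.continuousWithinAt
    have hF_mono : StrictMonoOn F (Icc ε' c') := by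
      apply strictMonoOn_of_hasDerivWithinAt_pos (convex_Icc ε' c') hF_cont
        (f' := f)
      · intro x hx
        rw [interior_Icc] at hx
        exact ((hF_deriv x (Ioo_subset_Icc_self hx)).hasDerivWithinAt)
      · intro x hx
        rw [interior_Icc] at hx
        exact inv_pos.mpr (hg_pos x (hsub (Ioo_subset_Icc_self hx)))
    have hFε : F ε = 0 := intervalIntegral.integral_same
    have hFc6 : F (c/6) = T0 := hT0'.symm
    have hF0le : F ε' < 0 := by
      have h := hF_mono hε'mem hεmem (by simp only [hε'def]; linarith)
      rwa [hFε] at h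
    have hT0lt : T0 < F c' := by
      have h := hF_mono hc6mem hc'mem (by simp only [hc'def]; linarith)
      rwa [hFc6] at h
    have hsurj' : ∀ t : ℝ, ∃ y, (t ∈ Icc (F ε') (F c') → y ∈ Icc ε' c' ∧ F y = t) := by
      intro t
      by_cases ht : t ∈ Icc (F ε') (F c')
      · obtain ⟨y, hy, hFy⟩ := intermediate_value_Icc hε'c'.le hF_cont ht
        exact ⟨y, fun _ => ⟨hy, hFy⟩⟩
      · exact ⟨ε, fun h => absurd h ht⟩
    choose J hJ using hsurj'
    have hmemIcc : ∀ t ∈ Icc (0:ℝ) T0, t ∈ Icc (F ε') (F c') := fun t ht =>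
      ⟨hF0le.le.trans ht.1, ht.2.trans hT0lt.le⟩
    have hJF : ∀ y ∈ Icc ε' c', J (F y) = y := by
      intro y hy
      have hm : F y ∈ Icc (F ε') (F c') :=
        ⟨hF_mono.monotoneOn hε'mem hy hy.1, hF_mono.monotoneOn hy hc'mem hy.2⟩
      obtain ⟨h1, h2⟩ := hJ (F y) hm
      exact hF_mono.injOn h1 hy h2
    have hJ0 : J 0 = ε := by
      have := hJF ε hεmem; rwa [hFε] at this
    have hJT0 : J T0 = c/6 := by
      have := hJF (c/6) hc6mem; rwa [hFc6] at this
    have hJmono : MonotoneOn J (Icc (0:ℝ) T0) := by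
      intro x hx y hy hxy
      have hx' := hJ x (hmemIcc x hx)
      have hy' := hJ y (hmemIcc y hy)
      by_contra h
      push_neg at h
      have h2 := hF_mono hy'.1 hx'.1 h
      rw [hx'.2, hy'.2] at h2
      exact absurd hxy (not_le.mpr h2)
    have hJcont : ∀ t ∈ Icc (0:ℝ) T0, ContinuousAt J t := by
      intro t ht
      have hJt := hJ t (hmemIcc t ht)
      have hJtl : ε' < J t := by
        have h1 : ε ≤ J t := by
          have := (hF_mono.le_iff_le hεmem hJt.1).mp (by rw [hFε, hJt.2]; exact ht.1)
          exact this
        simp only [hε'def]; linarith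
      have hJtr : J t < c' := by
        have h1 : J t ≤ c/6 := by
          exact (hF_mono.le_iff_le hJt.1 hc6mem).mp (by rw [hFc6, hJt.2]; exact ht.2)
        simp only [hc'def]; linarith
      rw [Metric.continuousAt_iff]
      intro η hη
      set η' : ℝ := min η (min (J t - ε') (c' - J t)) with hη'def
      have hη'0 : 0 < η' := lt_min hη (lt_min (by linarith) (by linarith))
      have hη'l : ε' ≤ J t - η' := by
        have : η' ≤ J t - ε' := (min_le_right _ _).trans (min_le_left _ _)
        linarith
      have hη'r : J t + η' ≤ c' := by
        have : η' ≤ c' - J t := (min_le_right _ _).trans (min_le_right _ _)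
        linarith
      have hu : J t - η' ∈ Icc ε' c' := ⟨hη'l, by linarith [hJt.1.2]⟩
      have hv : J t + η' ∈ Icc ε' c' := ⟨by linarith [hJt.1.1], hη'r⟩
      have hFu : F (J t - η') < t := by
        have := hF_mono hu hJt.1 (by linarith)
        rwa [hJt.2] at this
      have hFv : t < F (J t + η') := by
        have := hF_mono hJt.1 hv (by linarith)
        rwa [hJt.2] at this
      refine ⟨min (t - F (J t - η')) (F (J t + η') - t), lt_min (by linarith) (by linarith), ?_⟩
      intro s hs
      rw [Real.dist_eq] at hs
      have hs1 : F (J t - η') < s := by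
        have := abs_lt.mp hs
        have h2 := (min_le_left (t - F (J t - η')) (F (J t + η') - t))
        linarith [this.1]
      have hs2 : s < F (J t + η') := by
        have := abs_lt.mp hs
        have h2 := (min_le_right (t - F (J t - η')) (F (J t + η') - t))
        linarith [this.2]
      have hsmem : s ∈ Icc (F ε') (F c') :=
        ⟨(hF_mono.monotoneOn hε'mem hu hu.1).trans hs1.le,
          hs2.le.trans (hF_mono.monotoneOn hv hc'mem hv.2)⟩
      obtain ⟨hJs_mem, hFJs⟩ := hJ s hsmem
      have hl : J t - η' < J s := by
        by_contra hcon
        push_neg at hcon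
        have := hF_mono.monotoneOn hJs_mem hu hcon
        rw [hFJs] at this
        linarith
      have hr : J s < J t + η' := by
        by_contra hcon
        push_neg at hcon
        have := hF_mono.monotoneOn hv hJs_mem hcon
        rw [hFJs] at this
        linarith
      rw [Real.dist_eq, abs_lt]
      have : η' ≤ η := min_le_left _ _
      constructor <;> linarith
    have hJderiv : ∀ t ∈ Icc (0:ℝ) T0,
        HasDerivAt J (2 * (a - J t) * Real.sqrt ((b + J t) * J t)) t := by
      intro t ht
      have hJt := hJ t (hmemIcc t ht)
      have hgpos := hg_pos (J t) (hsub hJt.1)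
      have hfne : f (J t) ≠ 0 := inv_ne_zero hgpos.ne'
      have hfg : ∀ᶠ s in nhds t, F (J s) = s := by
        have hmem : t ∈ Ioo (F ε') (F c') :=
          ⟨lt_of_lt_of_le hF0le ht.1, lt_of_le_of_lt ht.2 hT0lt⟩
        filter_upwards [isOpen_Ioo.mem_nhds hmem] with s hs
        exact (hJ s (Ioo_subset_Icc_self hs)).2
      have hd : HasDerivAt F (f (J t)) (J t) := hF_deriv (J t) hJt.1
      have hinv := HasDerivAt.of_local_left_inverse (hJcont t ht) hd hfne hfg
      have heq : (f (J t))⁻¹ = 2 * (a - J t) * Real.sqrt ((b + J t) * J t) := by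
        show ((g (J t))⁻¹)⁻¹ = _
        rw [inv_inv]
      rwa [heq] at hinv
    refine ⟨⟨J, hJ0, hJderiv, hJmono, hJT0⟩, ?_⟩
    -- T0 ≤ 6/c
    have hac60 : 0 < a - c/6 := by rw [hac6]; linarith
    have hbε0 : 0 < b + ε := by linarith
    set K : ℝ := ((a - c/6) * Real.sqrt (b + ε))⁻¹ with hKdef
    have hsbε : 0 < Real.sqrt (b + ε) := Real.sqrt_pos.mpr hbε0
    have hbound : ∀ x ∈ Icc ε (c/6),
        ((a - x) * Real.sqrt ((b + x) * x))⁻¹ ≤ K * (Real.sqrt x)⁻¹ := by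
      intro x hx
      have hx0 : 0 < x := lt_of_lt_of_le hε hx.1
      have hsx : 0 < Real.sqrt x := Real.sqrt_pos.mpr hx0
      have h1 : 0 < (a - c/6) * (Real.sqrt (b + ε) * Real.sqrt x) :=
        mul_pos hac60 (mul_pos hsbε hsx)
      have h2 : (a - c/6) * (Real.sqrt (b + ε) * Real.sqrt x)
          ≤ (a - x) * Real.sqrt ((b + x) * x) := by
        rw [Real.sqrt_mul (by linarith)]
        have hs : Real.sqrt (b + ε) * Real.sqrt x ≤ Real.sqrt (b + x) * Real.sqrt x :=
          mul_le_mul_of_nonneg_right (Real.sqrt_le_sqrt (by linarith [hx.1])) hsx.le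
        have ha2 : a - c/6 ≤ a - x := by linarith [hx.2]
        exact mul_le_mul ha2 hs (by positivity) (by linarith)
      calc ((a - x) * Real.sqrt ((b + x) * x))⁻¹
          ≤ ((a - c/6) * (Real.sqrt (b + ε) * Real.sqrt x))⁻¹ := inv_anti₀ h1 h2
        _ = K * (Real.sqrt x)⁻¹ := by rw [← mul_assoc, mul_inv]
    have hint1 : IntervalIntegrable (fun x => ((a - x) * Real.sqrt ((b + x) * x))⁻¹)
        volume ε (c/6) := by
      have h2 : IntervalIntegrable (fun x => 2 * f x) volume ε (c/6) :=
        (hint ε hεmem (c/6) hc6mem).const_mul 2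
      have heq2 : (fun x => 2 * f x) = fun x => ((a - x) * Real.sqrt ((b + x) * x))⁻¹ := by
        funext x; rw [hf_half x]; ring
      rwa [heq2] at h2
    have hsqrt_co : ContinuousOn (fun x => (Real.sqrt x)⁻¹) (uIcc ε (c/6)) := by
      intro x hx
      rw [uIcc_of_le hlt.le] at hx
      have hx0 : 0 < x := lt_of_lt_of_le hε hx.1
      exact (Real.continuous_sqrt.continuousAt.inv₀
        (Real.sqrt_pos.mpr hx0).ne').continuousWithinAt
    have hint2 : IntervalIntegrable (fun x => K * (Real.sqrt x)⁻¹) volume ε (c/6) :=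
      ((continuousOn_const.mul hsqrt_co)).intervalIntegrable
    have hmono := intervalIntegral.integral_mono_on hlt.le hint1 hint2 hbound
    have hsqint : (∫ x in ε..(c/6), (Real.sqrt x)⁻¹)
        = 2 * Real.sqrt (c/6) - 2 * Real.sqrt ε := by
      have hanti : ∀ x ∈ uIcc ε (c/6),
          HasDerivAt (fun y => 2 * Real.sqrt y) ((Real.sqrt x)⁻¹) x := by
        intro x hx
        rw [uIcc_of_le hlt.le] at hx
        have hx0 : 0 < x := lt_of_lt_of_le hε hx.1
        have h := (Real.hasDerivAt_sqrt hx0.ne').const_mul 2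
        convert h using 1
        have hsx : Real.sqrt x ≠ 0 := (Real.sqrt_pos.mpr hx0).ne'
        rfl
        rfl
        rw [one_div, mul_inv, ← mul_assoc, mul_inv_cancel₀ (two_ne_zero' ℝ), one_mul]
      have := intervalIntegral.integral_eq_sub_of_hasDerivAt hanti
        (hsqrt_co.intervalIntegrable)
      rw [this]
    have hKint : (∫ x in ε..(c/6), K * (Real.sqrt x)⁻¹)
        = K * (2 * Real.sqrt (c/6) - 2 * Real.sqrt ε) := by
      rw [intervalIntegral.integral_const_mul, hsqint]
    have hK0 : 0 ≤ K := by positivity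
    have hsc6 : 0 < Real.sqrt (c/6) := Real.sqrt_pos.mpr (by positivity)
    have hstep : T0 ≤ K * Real.sqrt (c/6) := by
      rw [hT0]
      have h1 : (∫ x in ε..(c/6), ((a - x) * Real.sqrt ((b + x) * x))⁻¹)
          ≤ K * (2 * Real.sqrt (c/6) - 2 * Real.sqrt ε) := by
        rw [← hKint]; exact hmono
      have h2 : K * (2 * Real.sqrt (c/6) - 2 * Real.sqrt ε) ≤ K * (2 * Real.sqrt (c/6)) := by
        apply mul_le_mul_of_nonneg_left _ hK0
        have := Real.sqrt_nonneg ε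
        linarith
      nlinarith
    have hfinal : K * Real.sqrt (c/6) ≤ 6 / c := by
      have hsle : Real.sqrt (c/6) ≤ Real.sqrt (b + ε) := by
        apply Real.sqrt_le_sqrt
        rw [hb]; linarith
      have hc6b : c/6 ≤ a - c/6 := by rw [hac6]; linarith
      have hKle : K ≤ ((c/6) * Real.sqrt (c/6))⁻¹ := by
        apply inv_anti₀ (by positivity)
        exact mul_le_mul hc6b hsle hsc6.le (by linarith)
      have heqv : ((c/6) * Real.sqrt (c/6))⁻¹ * Real.sqrt (c/6) = 6 / c := by
        rw [mul_inv]
        field_simp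
      calc K * Real.sqrt (c/6) ≤ ((c/6) * Real.sqrt (c/6))⁻¹ * Real.sqrt (c/6) :=
            mul_le_mul_of_nonneg_right hKle hsc6.le
        _ = 6 / c := heqv
    exact hstep.trans hfinal
  · -- ε = c/6
    have hT00 : T0 = 0 := by
      rw [hT0, heq, intervalIntegral.integral_same, mul_zero]
    refine ⟨⟨fun t => ε + g ε * t, by simp, ?_, ?_, ?_⟩, ?_⟩
    · intro t ht
      rw [hT00] at ht
      have ht0 : t = 0 := le_antisymm ht.2 ht.1
      subst ht0
      have hd : HasDerivAt (fun t : ℝ => ε + g ε * t) (g ε) 0 := by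
        simpa using ((hasDerivAt_id (0:ℝ)).const_mul (g ε)).const_add ε
      convert hd using 1
      simp [hgdef]
    · intro x hx y hy hxy
      rw [hT00] at hx hy
      have : x = y := by
        have hx0 : x = 0 := le_antisymm hx.2 hx.1
        have hy0 : y = 0 := le_antisymm hy.2 hy.1
        rw [hx0, hy0]
      exact le_of_eq (by rw [this])
    · rw [hT00]; simpa using heq
    · rw [hT00]; positivity
  · -- c/6 < ε
    have hTneg : T0 < 0 := by
      have hsub2 : Icc (c/6) ε ⊆ Ioo 0 a := by
        intro y hy
        exact ⟨lt_of_lt_of_le (by positivity) hy.1, lt_of_le_of_lt hy.2 hεa⟩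
      have hfi : IntervalIntegrable f volume (c/6) ε :=
        (hf_co.mono ((by rw [uIcc_of_le hgt.le] : uIcc (c/6) ε ⊆ Icc (c/6) ε).trans
          hsub2)).intervalIntegrable
      have hpos : 0 < ∫ s in (c/6)..ε, f s := by
        apply intervalIntegral_pos_of_pos_on hfi _ hgt
        intro x hx
        exact inv_pos.mpr (hg_pos x (hsub2 (Ioo_subset_Icc_self hx)))
      rw [hT0']
      rw [intervalIntegral.integral_symm]
      linarith
    refine ⟨⟨fun t => if t = 0 then ε else c/6, by simp, ?_, ?_, ?_⟩, ?_⟩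
    · intro t ht
      exact absurd (ht.1.trans ht.2) (by linarith)
    · intro x hx
      exact absurd (hx.1.trans hx.2) (by linarith)
    · simp [hTneg.ne]
    · have : (0:ℝ) ≤ 6 / c := by positivity
      linarith
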